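/- Equi-satisfiable diamond-elimination for Krom clauses: let φ = φ₀ ∧ ∇(◇_α λ ∨ μ) be a Krom formula over alphabet P, where λ is a positive literal and μ a literal, and let p ∉ P be fresh. Define φ' = φ₀ ∧ ∇(¬□_α p ∨ μ) ∧ ∇□_α(p ∨ λ). Then for every model M over P and world w: M,w ⊩ φ iff there exists an extension M' of M to P ∪ {p} with M',w ⊩ φ'. -/

import Mathlib

/-- A Kripke model: accessibility relations indexed by `ι`, valuation over letters `P`. -/
structure KModel (ι P W : Type) where
  rel : ι → W → W → Prop
  val : W → P → Prop

/-- General positive literals: `⊤ | p | ◇_a λ | □_a λ`. -/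
inductive PLit (ι P : Type) : Type
  | top : PLit ι P
  | atom : P → PLit ι P
  | dia : ι → PLit ι P → PLit ι P
  | box : ι → PLit ι P → PLit ι P

/-- Positive box-literals: `⊤ | p | □_a λ`. -/
inductive BLit (ι P : Type) : Type
  | top : BLit ι P
  | atom : P → BLit ι P
  | box : ι → BLit ι P → BLit ι P

/-- Positive diamond-literals: `⊤ | p | ◇_a λ`. -/
inductive DLit (ι P : Type) : Type
  | top : DLit ι P
  | atom : P → DLit ι P
  | dia : ι → DLit ι P → DLit ι P

def PLit.sat {ι P W : Type} (M : KModel ι P W) : W → PLit ι P → Prop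
  | _, .top => True
  | w, .atom p => M.val w p
  | w, .dia a l => ∃ v, M.rel a w v ∧ PLit.sat M v l
  | w, .box a l => ∀ v, M.rel a w v → PLit.sat M v l

def BLit.sat {ι P W : Type} (M : KModel ι P W) : W → BLit ι P → Prop
  | _, .top => True
  | w, .atom p => M.val w p
  | w, .box a l => ∀ v, M.rel a w v → BLit.sat M v l

def DLit.sat {ι P W : Type} (M : KModel ι P W) : W → DLit ι P → Prop
  | _, .top => True
  | w, .atom p => M.val w p
  | w, .dia a l => ∃ v, M.rel a w v ∧ DLit.sat M v l

/-- Satisfaction of a property behind a prefix `∇` of universal modalities. -/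
def nablaSat {ι P W : Type} (M : KModel ι P W) : List ι → W → (W → Prop) → Prop
  | [], w, Φ => Φ w
  | a :: rest, w, Φ => ∀ v, M.rel a w v → nablaSat M rest v Φ

/-- A Horn clause `∇(λ₁ ∧ … ∧ λₙ → μ)` with general positive literals;
`concl = none` encodes the consequent `⊥`. -/
structure HornClause (ι P : Type) where
  nabla : List ι
  ante : List (PLit ι P)
  concl : Option (PLit ι P)

def HornClause.sat {ι P W : Type} (M : KModel ι P W) (w : W) (c : HornClause ι P) : Prop :=
  nablaSat M c.nabla w fun v =>
    (∀ l ∈ c.ante, PLit.sat M v l) → c.concl.elim False fun l => PLit.sat M v l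

def hornSat {ι P W : Type} (M : KModel ι P W) (w : W) (φ : List (HornClause ι P)) : Prop :=
  ∀ c ∈ φ, c.sat M w

/-- A Horn-box clause: positive literals use boxes only. -/
structure HornBoxClause (ι P : Type) where
  nabla : List ι
  ante : List (BLit ι P)
  concl : Option (BLit ι P)

def HornBoxClause.sat {ι P W : Type} (M : KModel ι P W) (w : W) (c : HornBoxClause ι P) : Prop :=
  nablaSat M c.nabla w fun v =>
    (∀ l ∈ c.ante, BLit.sat M v l) → c.concl.elim False fun l => BLit.sat M v l

def hornBoxSat {ι P W : Type} (M : KModel ι P W) (w : W) (φ : List (HornBoxClause ι P)) : Prop :=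
  ∀ c ∈ φ, c.sat M w

/-- A Horn-diamond clause: positive literals use diamonds only. -/
structure HornDiaClause (ι P : Type) where
  nabla : List ι
  ante : List (DLit ι P)
  concl : Option (DLit ι P)

def HornDiaClause.sat {ι P W : Type} (M : KModel ι P W) (w : W) (c : HornDiaClause ι P) : Prop :=
  nablaSat M c.nabla w fun v =>
    (∀ l ∈ c.ante, DLit.sat M v l) → c.concl.elim False fun l => DLit.sat M v l

def hornDiaSat {ι P W : Type} (M : KModel ι P W) (w : W) (φ : List (HornDiaClause ι P)) : Prop :=
  ∀ c ∈ φ, c.sat M w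

/-- A signed literal: a positive literal or its negation (`pos = false`). -/
structure SLit (ι P : Type) where
  pos : Bool
  lit : PLit ι P

def SLit.sat {ι P W : Type} (M : KModel ι P W) (w : W) (l : SLit ι P) : Prop :=
  if l.pos then PLit.sat M w l.lit else ¬ PLit.sat M w l.lit

/-- A Krom clause `∇(ℓ₁ ∨ ℓ₂)`; `l2 = none` encodes a unit clause. -/
structure KromClause (ι P : Type) where
  nabla : List ι
  l1 : SLit ι P
  l2 : Option (SLit ι P)

def KromClause.sat {ι P W : Type} (M : KModel ι P W) (w : W) (c : KromClause ι P) : Prop :=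
  nablaSat M c.nabla w fun v =>
    SLit.sat M v c.l1 ∨ c.l2.elim False fun l => SLit.sat M v l

def kromSat {ι P W : Type} (M : KModel ι P W) (w : W) (φ : List (KromClause ι P)) : Prop :=
  ∀ c ∈ φ, c.sat M w

/-- A signed box-literal. -/
structure SBLit (ι P : Type) where
  pos : Bool
  lit : BLit ι P

def SBLit.sat {ι P W : Type} (M : KModel ι P W) (w : W) (l : SBLit ι P) : Prop :=
  if l.pos then BLit.sat M w l.lit else ¬ BLit.sat M w l.lit

/-- A Krom-box clause. -/
structure KromBoxClause (ι P : Type) where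
  nabla : List ι
  l1 : SBLit ι P
  l2 : Option (SBLit ι P)

def KromBoxClause.sat {ι P W : Type} (M : KModel ι P W) (w : W) (c : KromBoxClause ι P) : Prop :=
  nablaSat M c.nabla w fun v =>
    SBLit.sat M v c.l1 ∨ c.l2.elim False fun l => SBLit.sat M v l

def kromBoxSat {ι P W : Type} (M : KModel ι P W) (w : W) (φ : List (KromBoxClause ι P)) : Prop :=
  ∀ c ∈ φ, c.sat M w

/-- A signed diamond-literal. -/
structure SDLit (ι P : Type) where
  pos : Bool
  lit : DLit ι P

def SDLit.sat {ι P W : Type} (M : KModel ι P W) (w : W) (l : SDLit ι P) : Prop :=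
  if l.pos then DLit.sat M w l.lit else ¬ DLit.sat M w l.lit

/-- A Krom-diamond clause. -/
structure KromDiaClause (ι P : Type) where
  nabla : List ι
  l1 : SDLit ι P
  l2 : Option (SDLit ι P)

def KromDiaClause.sat {ι P W : Type} (M : KModel ι P W) (w : W) (c : KromDiaClause ι P) : Prop :=
  nablaSat M c.nabla w fun v =>
    SDLit.sat M v c.l1 ∨ c.l2.elim False fun l => SDLit.sat M v l

def kromDiaSat {ι P W : Type} (M : KModel ι P W) (w : W) (φ : List (KromDiaClause ι P)) : Prop :=
  ∀ c ∈ φ, c.sat M w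

/-- Renaming of propositional letters in a positive literal. -/
def PLit.map {ι P Q : Type} (f : P → Q) : PLit ι P → PLit ι Q
  | .top => .top
  | .atom p => .atom (f p)
  | .dia a l => .dia a (PLit.map f l)
  | .box a l => .box a (PLit.map f l)

def SLit.map {ι P Q : Type} (f : P → Q) (l : SLit ι P) : SLit ι Q :=
  ⟨l.pos, l.lit.map f⟩

def KromClause.map {ι P Q : Type} (f : P → Q) (c : KromClause ι P) : KromClause ι Q :=
  ⟨c.nabla, c.l1.map f, c.l2.map (SLit.map f)⟩

/-- The letter `q` occurs in the positive literal. -/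
def PLit.occurs {ι P : Type} (q : P) : PLit ι P → Prop
  | .top => False
  | .atom r => r = q
  | .dia _ l => PLit.occurs q l
  | .box _ l => PLit.occurs q l

/-- A positive literal containing no propositional letters. -/
def PLit.letterFree {ι P : Type} : PLit ι P → Prop
  | .top => True
  | .atom _ => False
  | .dia _ l => PLit.letterFree l
  | .box _ l => PLit.letterFree l

/-- The letter `q` occurs in the Krom clause. -/
def KromClause.occurs {ι P : Type} (c : KromClause ι P) (q : P) : Prop :=
  PLit.occurs q c.l1.lit ∨ c.l2.elim False fun l => PLit.occurs q l.lit

theorem nabla_mono' {ι P Q W : Type} (rel : ι → W → W → Prop)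
    (V : W → P → Prop) (V' : W → Q → Prop) {Φ Ψ : W → Prop}
    (h : ∀ v, Φ v → Ψ v) :
    ∀ (l : List ι) (w : W),
      nablaSat ⟨rel, V⟩ l w Φ → nablaSat ⟨rel, V'⟩ l w Ψ := by
  intro l
  induction l with
  | nil => intro w; exact h w
  | cons a rest ih =>
    intro w hw v hv
    exact ih v (hw v hv)

theorem nabla_mono2' {ι P Q W : Type} (rel : ι → W → W → Prop)
    (V : W → P → Prop) (V' : W → Q → Prop) {Φ₁ Φ₂ Ψ : W → Prop}
    (h : ∀ v, Φ₁ v → Φ₂ v → Ψ v) :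
    ∀ (l : List ι) (w : W),
      nablaSat ⟨rel, V⟩ l w Φ₁ → nablaSat ⟨rel, V⟩ l w Φ₂ →
        nablaSat ⟨rel, V'⟩ l w Ψ := by
  intro l
  induction l with
  | nil => intro w; exact h w
  | cons a rest ih =>
    intro w h1 h2 v hv
    exact ih v (h1 v hv) (h2 v hv)

theorem nabla_of_forall {ι P W : Type} (M : KModel ι P W) {Φ : W → Prop}
    (h : ∀ v, Φ v) : ∀ (l : List ι) (w : W), nablaSat M l w Φ := by
  intro l
  induction l with
  | nil => intro w; exact h w
  | cons a rest ih => intro w v _; exact ih v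

theorem nabla_iff' {ι P Q W : Type} (rel : ι → W → W → Prop)
    (V : W → P → Prop) (V' : W → Q → Prop) {Φ Ψ : W → Prop}
    (h : ∀ v, Φ v ↔ Ψ v) :
    ∀ (l : List ι) (w : W),
      nablaSat ⟨rel, V⟩ l w Φ ↔ nablaSat ⟨rel, V'⟩ l w Ψ := by
  intro l
  induction l with
  | nil => intro w; exact h w
  | cons a rest ih =>
    intro w
    simp only [nablaSat]
    exact forall_congr' fun v => imp_congr Iff.rfl (ih v)

theorem nabla_append {ι P W : Type} (M : KModel ι P W) (a : ι) (Φ : W → Prop) :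
    ∀ (l : List ι) (w : W),
      nablaSat M (l ++ [a]) w Φ ↔ nablaSat M l w (fun v => ∀ u, M.rel a v u → Φ u) := by
  intro l
  induction l with
  | nil => intro w; simp [nablaSat]
  | cons b rest ih =>
    intro w
    simp only [List.cons_append, nablaSat]
    exact forall_congr' fun v => imp_congr Iff.rfl (ih v)

theorem plit_map_sat {ι P W : Type} {rel : ι → W → W → Prop} {V : W → P → Prop}
    {V' : W → Option P → Prop} (h : ∀ u q, V' u (some q) ↔ V u q) :
    ∀ (l : PLit ι P) (u : W),
      PLit.sat ⟨rel, V'⟩ u (l.map some) ↔ PLit.sat ⟨rel, V⟩ u l := by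
  intro l
  induction l with
  | top => intro u; simp [PLit.map, PLit.sat]
  | atom p => intro u; simpa [PLit.map, PLit.sat] using h u p
  | dia a l ih => intro u; simp only [PLit.map, PLit.sat]; exact exists_congr fun v => and_congr Iff.rfl (ih v)
  | box a l ih => intro u; simp only [PLit.map, PLit.sat]; exact forall_congr' fun v => imp_congr Iff.rfl (ih v)

theorem slit_map_sat {ι P W : Type} {rel : ι → W → W → Prop} {V : W → P → Prop}
    {V' : W → Option P → Prop} (h : ∀ u q, V' u (some q) ↔ V u q)
    (l : SLit ι P) (u : W) :
    SLit.sat ⟨rel, V'⟩ u (l.map some) ↔ SLit.sat ⟨rel, V⟩ u l := by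
  cases l with
  | mk pos lit =>
    cases pos <;> simp [SLit.sat, SLit.map, plit_map_sat h lit u]

theorem krom_map_sat {ι P W : Type} {rel : ι → W → W → Prop} {V : W → P → Prop}
    {V' : W → Option P → Prop} (h : ∀ u q, V' u (some q) ↔ V u q)
    (c : KromClause ι P) (w : W) :
    KromClause.sat ⟨rel, V'⟩ w (c.map some) ↔ KromClause.sat ⟨rel, V⟩ w c := by
  unfold KromClause.sat KromClause.map
  refine nabla_iff' rel V' V (fun v => ?_) c.nabla w
  refine or_congr (slit_map_sat h c.l1 v) ?_
  cases c.l2 with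
  | none => simp
  | some l => simpa using slit_map_sat h l v

/-- diamond-elimination for Krom clauses. Replacing a positive
`◇_a λ` in a Krom clause by `¬□_a p ∨ μ` together with `∇□_a(p ∨ λ)` for a
fresh letter `p` (the alphabet `P` is extended to `Option P`, the fresh
letter being `none`) preserves models up to extension. -/
theorem krom_dia_elimination {ι P : Type} (a : ι) (nab : List ι)
    (lam : PLit ι P) (mu : SLit ι P) (φ₀ : List (KromClause ι P)) :
    ∀ (W : Type) (rel : ι → W → W → Prop) (V : W → P → Prop) (w : W),
      kromSat ⟨rel, V⟩ w (φ₀ ++ [⟨nab, ⟨true, .dia a lam⟩, some mu⟩]) ↔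
      ∃ V' : W → Option P → Prop,
        (∀ u q, V' u (some q) ↔ V u q) ∧
        kromSat ⟨rel, V'⟩ w
          (φ₀.map (KromClause.map some) ++
            [⟨nab, ⟨false, .box a (.atom none)⟩, some (mu.map some)⟩,
             ⟨nab ++ [a], ⟨true, .atom none⟩, some ⟨true, lam.map some⟩⟩]) := by
  intro W rel V w
  constructor
  · intro hsat
    refine ⟨fun u o => o.elim (¬ PLit.sat ⟨rel, V⟩ u lam) (V u), fun u q => Iff.rfl, ?_⟩
    set V' : W → Option P → Prop := fun u o => o.elim (¬ PLit.sat ⟨rel, V⟩ u lam) (V u)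
    have hagree : ∀ u q, V' u (some q) ↔ V u q := fun u q => Iff.rfl
    intro c hc
    rw [List.mem_append] at hc
    rcases hc with hc | hc
    · obtain ⟨c₀, hc₀, rfl⟩ := List.mem_map.mp hc
      exact (krom_map_sat hagree c₀ w).mpr
        (hsat c₀ (List.mem_append_left _ hc₀))
    · have hkey := hsat ⟨nab, ⟨true, .dia a lam⟩, some mu⟩
        (List.mem_append_right _ (by simp))
      simp only [List.mem_cons, List.mem_singleton] at hc
      rcases hc with rfl | rfl | h
      · -- second clause: ∇(¬□_a p ∨ μ)
        unfold KromClause.sat at hkey ⊢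
        refine nabla_mono' rel V V' (fun v hv => ?_) nab w hkey
        simp only [Option.elim] at hv ⊢
        rcases hv with h1 | h2
        · left
          simp only [SLit.sat, if_pos, if_neg, Bool.false_eq_true, if_false] at h1 ⊢
          simp only [PLit.sat] at h1 ⊢
          obtain ⟨v', hrel, hlam⟩ := h1
          intro hall
          exact (hall v' hrel) hlam
        · right
          exact (slit_map_sat hagree mu v).mpr h2
      · -- third clause: ∇□_a(p ∨ λ)
        unfold KromClause.sat
        refine nabla_of_forall _ (fun v => ?_) _ w
        simp only [Option.elim]
        by_cases hl : PLit.sat ⟨rel, V⟩ v lam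
        · right
          simp only [SLit.sat, if_pos]
          exact (plit_map_sat hagree lam v).mpr hl
        · left
          simp only [SLit.sat, if_pos, PLit.sat]
          exact hl
      · exact absurd h (by simp)
  · rintro ⟨V', hagree, hsat⟩
    intro c hc
    rw [List.mem_append] at hc
    rcases hc with hc | hc
    · exact (krom_map_sat hagree c w).mp
        (hsat (c.map some) (List.mem_append_left _ (List.mem_map_of_mem hc)))
    · simp only [List.mem_singleton] at hc
      subst hc
      have h2 := hsat ⟨nab, ⟨false, .box a (.atom none)⟩, some (mu.map some)⟩
        (List.mem_append_right _ (by simp))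
      have h3 := hsat ⟨nab ++ [a], ⟨true, .atom none⟩, some ⟨true, lam.map some⟩⟩
        (List.mem_append_right _ (by simp))
      unfold KromClause.sat at h2 h3 ⊢
      rw [nabla_append] at h3
      refine nabla_mono2' rel V' V (fun v hv2 hv3 => ?_) nab w h2 h3
      simp only [Option.elim] at hv2 hv3 ⊢
      rcases hv2 with h1 | hmu
      · left
        simp only [SLit.sat, if_pos, Bool.false_eq_true, if_false, PLit.sat] at h1 ⊢
        push_neg at h1
        obtain ⟨v', hrel, hnone⟩ := h1
        refine ⟨v', hrel, ?_⟩
        rcases hv3 v' hrel with hp | hl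
        · simp only [SLit.sat, if_pos, PLit.sat] at hp
          exact absurd hp hnone
        · simp only [SLit.sat, if_pos] at hl
          exact (plit_map_sat hagree lam v').mp hl
      · right
        exact (slit_map_sat hagree mu v).mp hmu
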